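/- In the Bellman optimality analysis of the single-source SMDP, if the index condition γ(δ) ≥ β̄ holds, where γ(δ) = inf_{τ≥1} (1/τ) Σ_{k=0}^{τ−1} E[p(δ+k+T₁)], then waiting is never strictly better than transmitting immediately at AoI δ: inf_{τ≥1} E[Σ_{k=0}^{τ+T₁−1}(p(δ+k) − β̄)] ≥ E[Σ_{k=0}^{T₁−1}(p(δ+k) − β̄)]. -/

import Mathlib

open Finset

/-- if the index condition `γ(δ) ≥ β̄` holds, where
`γ(δ) = inf_{τ≥1} (1/τ) Σ_{k<τ} E[p(δ+k+T₁)]`, then waiting is never strictly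
better than transmitting immediately at AoI `δ`:
`inf_{τ≥1} E[Σ_{k=0}^{τ+T₁−1} (p(δ+k) − β̄)] ≥ E[Σ_{k=0}^{T₁−1} (p(δ+k) − β̄)]`. -/
theorem stmt17 (N : ℕ) (pT p : ℕ → ℝ) (M βbar : ℝ) (δ : ℕ)
    (hpTnn : ∀ t, 0 ≤ pT t) (hpT1 : ∑ t ∈ Finset.range N, pT t = 1)
    (hM : ∀ n, |p n| ≤ M)
    (hidx : βbar ≤ sInf {x : ℝ | ∃ τ : ℕ, 1 ≤ τ ∧
      x = (1 / (τ : ℝ)) * ∑ k ∈ Finset.range τ,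
            ∑ t ∈ Finset.range N, pT t * p (δ + k + t)}) :
    ∑ t ∈ Finset.range N, pT t * ∑ k ∈ Finset.range t, (p (δ + k) - βbar)
      ≤ sInf {x : ℝ | ∃ τ : ℕ, 1 ≤ τ ∧
          x = ∑ t ∈ Finset.range N, pT t *
                ∑ k ∈ Finset.range (τ + t), (p (δ + k) - βbar)} := by
  have hMnn : 0 ≤ M := le_trans (abs_nonneg _) (hM 0)
  -- the γ set is bounded below by -M
  have hbdd : BddBelow {x : ℝ | ∃ τ : ℕ, 1 ≤ τ ∧
      x = (1 / (τ : ℝ)) * ∑ k ∈ Finset.range τ,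
            ∑ t ∈ Finset.range N, pT t * p (δ + k + t)} := by
    refine ⟨-M, ?_⟩
    rintro x ⟨σ, hσ, rfl⟩
    have hσ0 : (0:ℝ) < σ := by exact_mod_cast hσ
    have hinner : ∀ k : ℕ, -M ≤ ∑ t ∈ Finset.range N, pT t * p (δ + k + t) := by
      intro k
      calc -M = ∑ t ∈ Finset.range N, pT t * (-M) := by
              rw [← Finset.sum_mul, hpT1, one_mul]
        _ ≤ ∑ t ∈ Finset.range N, pT t * p (δ + k + t) := by
              apply Finset.sum_le_sum
              intro t _
              exact mul_le_mul_of_nonneg_left (neg_le_of_abs_le (hM _)) (hpTnn t)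
    have hsum : (σ : ℝ) * (-M) ≤ ∑ k ∈ Finset.range σ,
        ∑ t ∈ Finset.range N, pT t * p (δ + k + t) := by
      calc (σ : ℝ) * (-M) = ∑ _k ∈ Finset.range σ, (-M) := by
              rw [Finset.sum_const, Finset.card_range, nsmul_eq_mul]
        _ ≤ _ := Finset.sum_le_sum fun k _ => hinner k
    have := mul_le_mul_of_nonneg_left hsum (le_of_lt (one_div_pos.mpr hσ0))
    calc -M = (1 / (σ:ℝ)) * ((σ:ℝ) * (-M)) := by field_simp
      _ ≤ _ := this
  -- key: τ βbar ≤ ∑_{k<τ} ∑_t pT t p(δ+k+t)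
  have key : ∀ τ : ℕ, 1 ≤ τ → (τ : ℝ) * βbar ≤ ∑ k ∈ Finset.range τ,
      ∑ t ∈ Finset.range N, pT t * p (δ + k + t) := by
    intro τ hτ
    have hτ0 : (0:ℝ) < τ := by exact_mod_cast hτ
    have hmem : (1 / (τ : ℝ)) * ∑ k ∈ Finset.range τ,
        ∑ t ∈ Finset.range N, pT t * p (δ + k + t) ∈ {x : ℝ | ∃ τ : ℕ, 1 ≤ τ ∧
      x = (1 / (τ : ℝ)) * ∑ k ∈ Finset.range τ,
            ∑ t ∈ Finset.range N, pT t * p (δ + k + t)} := ⟨τ, hτ, rfl⟩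
    have h := hidx.trans (csInf_le hbdd hmem)
    have := mul_le_mul_of_nonneg_left h (le_of_lt hτ0)
    calc (τ : ℝ) * βbar ≤ (τ:ℝ) * ((1 / (τ : ℝ)) * ∑ k ∈ Finset.range τ,
          ∑ t ∈ Finset.range N, pT t * p (δ + k + t)) := this
      _ = _ := by field_simp
  apply le_csInf
  · exact ⟨_, ⟨1, le_refl 1, rfl⟩⟩
  · rintro b ⟨τ, hτ, rfl⟩
    have hb : ∑ t ∈ Finset.range N, pT t * ∑ k ∈ Finset.range (τ + t), (p (δ + k) - βbar)
        = (∑ t ∈ Finset.range N, pT t * ∑ k ∈ Finset.range t, (p (δ + k) - βbar))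
          + ((∑ k ∈ Finset.range τ, ∑ t ∈ Finset.range N, pT t * p (δ + k + t))
              - (τ : ℝ) * βbar) := by
      have h1 : ∀ t ∈ Finset.range N,
          pT t * ∑ k ∈ Finset.range (τ + t), (p (δ + k) - βbar)
          = pT t * ∑ k ∈ Finset.range t, (p (δ + k) - βbar)
            + ∑ k ∈ Finset.range τ, (pT t * p (δ + k + t) - pT t * βbar) := by
        intro t _
        rw [add_comm τ t, Finset.sum_range_add, mul_add]
        congr 1
        rw [Finset.mul_sum]
        refine Finset.sum_congr rfl fun k _ => ?_
        rw [show δ + (t + k) = δ + k + t by omega]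
        ring
      rw [Finset.sum_congr rfl h1, Finset.sum_add_distrib]
      congr 1
      rw [Finset.sum_comm]
      have h3 : ∀ k ∈ Finset.range τ, ∑ t ∈ Finset.range N,
          (pT t * p (δ + k + t) - pT t * βbar)
          = (∑ t ∈ Finset.range N, pT t * p (δ + k + t)) - βbar := by
        intro k _
        rw [Finset.sum_sub_distrib, ← Finset.sum_mul, hpT1, one_mul]
      rw [Finset.sum_congr rfl h3, Finset.sum_sub_distrib, Finset.sum_const,
        Finset.card_range, nsmul_eq_mul]
    have h2 := key τ hτ
    linarith [h2, hb.ge]
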